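/- Let p ∈ (0,1), let L ≥ 4/p be a real number, and set ρ = 1 - 7/(pL²). Then for any z = ρe^{iθ} with |θ| ≤ π/L, the complex number w = (z - q)/p (where q = 1-p) satisfies |w| ≤ 1. -/

import Mathlib

open Real Complex

set_option maxHeartbeats 800000 in
/-- For `p ∈ (0,1)`, `L ≥ 4/p`, `ρ = 1 - 7/(pL²)` and `z = ρe^{iθ}` with `|θ| ≤ π/L`,
the number `w = (z - q)/p` (with `q = 1-p`) satisfies `|w| ≤ 1`. -/
theorem stmt_1 (p : ℝ) (hp0 : 0 < p) (hp1 : p < 1) (L : ℝ) (hL : 4 / p ≤ L)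
    (θ : ℝ) (hθ : |θ| ≤ π / L) :
    ‖((((1 - 7 / (p * L ^ 2)) : ℝ) : ℂ) * Complex.exp (θ * Complex.I)
        - ((1 - p : ℝ) : ℂ)) / (p : ℂ)‖ ≤ 1 := by
  have hL4 : (4 : ℝ) ≤ L := le_trans (by rw [le_div_iff₀ hp0]; nlinarith) hL
  have hLpos : (0 : ℝ) < L := by linarith
  have hLsq : (0:ℝ) < L ^ 2 := by positivity
  have hpL : 4 ≤ p * L := by
    have := (div_le_iff₀ hp0).mp hL
    linarith [this]
  set ε : ℝ := 7 / (p * L ^ 2) with hε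
  have hpL2 : 0 < p * L ^ 2 := by positivity
  have hεpos : 0 < ε := by positivity
  have hεle : ε ≤ 7 / (4 * L) := by
    apply div_le_div_of_nonneg_left (by norm_num) (by positivity)
    nlinarith
  have hεlt1 : ε < 1 := by
    have : 7 / (4 * L) ≤ 7 / 16 := by
      apply div_le_div_of_nonneg_left (by norm_num) (by norm_num)
      linarith
    linarith
  have hεsq : ε ^ 2 ≤ 49 / (16 * L ^ 2) := by
    rw [hε, div_pow, div_le_div_iff₀ (by positivity) (by positivity)]
    have h16 : 16 ≤ (p * L) ^ 2 := by nlinarith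
    nlinarith [mul_le_mul_of_nonneg_left h16 (by positivity : (0:ℝ) ≤ 49 * L ^ 2)]
  have hθsq : θ ^ 2 ≤ π ^ 2 / L ^ 2 := by
    have h1 := abs_le.mp hθ
    have h2 : θ ^ 2 ≤ (π / L) ^ 2 := by nlinarith [h1.1, h1.2]
    rwa [div_pow] at h2
  have hπ : π ≤ 3.15 := by linarith [Real.pi_lt_d2]
  have hcos : 1 - θ ^ 2 / 2 ≤ Real.cos θ := Real.one_sub_sq_div_two_le_cos
  set A : ℂ := (((1 - 7 / (p * L ^ 2)) : ℝ) : ℂ) * Complex.exp (θ * Complex.I)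
      - ((1 - p : ℝ) : ℂ) with hA
  have hAeq : A = Complex.ofReal ((1 - ε) * Real.cos θ - (1 - p))
      + Complex.ofReal ((1 - ε) * Real.sin θ) * Complex.I := by
    rw [hA, Complex.exp_mul_I, ← Complex.ofReal_cos, ← Complex.ofReal_sin]
    simp only [hε]
    push_cast
    ring
  have hnormsq : ‖A‖ ^ 2 = ((1 - ε) * Real.cos θ - (1 - p)) ^ 2
      + ((1 - ε) * Real.sin θ) ^ 2 := by
    rw [hAeq, Complex.sq_norm, Complex.normSq_add_mul_I]
  have hq : 0 ≤ 1 - p := by linarith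
  have h1ε : 0 ≤ 1 - ε := by linarith
  have hρq : (1 - ε) * (1 - p) ≤ 1 := by nlinarith
  have hkey : ‖A‖ ^ 2 ≤ p ^ 2 := by
    rw [hnormsq]
    have hπsq : π ^ 2 ≤ 9.9225 := by nlinarith [Real.pi_pos]
    have hθ2 : θ ^ 2 ≤ 9.9225 / L ^ 2 := by
      calc θ ^ 2 ≤ π ^ 2 / L ^ 2 := hθsq
        _ ≤ 9.9225 / L ^ 2 := by gcongr
    have h2pε : 2 * p * ε = 14 / L ^ 2 := by
      rw [hε]; field_simp; ring
    have hcomb : ε ^ 2 + θ ^ 2 ≤ 2 * p * ε := by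
      rw [h2pε]
      have hsum : 49 / (16 * L ^ 2) + 9.9225 / L ^ 2 ≤ 14 / L ^ 2 := by
        rw [show (49:ℝ) / (16 * L ^ 2) = (49 / 16) / L ^ 2 by ring,
          ← add_div]
        gcongr
        norm_num
      linarith
    set c : ℝ := Real.cos θ with hc
    set s : ℝ := Real.sin θ with hs
    have hsc : s ^ 2 + c ^ 2 = 1 := Real.sin_sq_add_cos_sq θ
    have hint2 : 0 ≤ (1 - ε) * (1 - p) * (c - (1 - θ ^ 2 / 2)) :=
      mul_nonneg (mul_nonneg h1ε hq) (by linarith)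
    have hint3 : 0 ≤ (1 - (1 - ε) * (1 - p)) * θ ^ 2 :=
      mul_nonneg (by linarith) (sq_nonneg θ)
    clear_value c s
    nlinarith [hsc, hint2, hint3, hcomb, sq_nonneg (p - ε)]
  have hAle : ‖A‖ ≤ p := by nlinarith [norm_nonneg A]
  rw [norm_div]
  have hpn : ‖(p : ℂ)‖ = p := by
    rw [Complex.norm_real]; exact Real.norm_of_nonneg hp0.le
  rw [hpn, div_le_one hp0]
  exact hAle
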